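/- For a purely imaginary unit quaternion q = b·i + c·j + d·k with b² + c² + d² = 1, the ℝ-linear map x ↦ q⁻¹ · x · j on ℍ has eigenvalues 1 and -1, each with multiplicity two. -/

import Mathlib

open Quaternion Polynomial

theorem charpoly_aux (b c d : ℝ) (h : b ^ 2 + c ^ 2 + d ^ 2 = 1) :
    (!![c, d, 0, -b; d, -c, b, 0; 0, b, c, d; -b, 0, d, -c]).charpoly
      = (X - 1) ^ 2 * (X + 1) ^ 2 := by
  rw [Matrix.charpoly]
  rw [show (!![c, d, 0, -b; d, -c, b, 0; 0, b, c, d; -b, 0, d, -c]).charmatrix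
      = !![X - C c, -C d, 0, C b; -C d, X + C c, -C b, 0;
           0, -C b, X - C c, -C d; C b, 0, -C d, X + C c] from by
    ext r s
    fin_cases r <;> fin_cases s <;>
      simp [Matrix.charmatrix_apply, Matrix.one_apply] <;> ring]
  have hC : (C b) ^ 2 + (C c) ^ 2 + (C d) ^ 2 = (1 : ℝ[X]) := by
    rw [← C_pow, ← C_pow, ← C_pow, ← C_add, ← C_add, h, C_1]
  simp only [Matrix.det_succ_row_zero, Fin.sum_univ_succ, Matrix.det_fin_three]
  simp [Fin.succAbove, Matrix.submatrix, Fin.lt_def, show ((2 : Fin 3).castSucc : Fin 4) = 2 from rfl, show ((1 : Fin 3).castSucc : Fin 4) = 1 from rfl, show ((0 : Fin 3).castSucc : Fin 4) = 0 from rfl]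
  linear_combination ((C b) ^ 2 + (C c) ^ 2 + (C d) ^ 2 + 1 - 2 * X ^ 2) * hC

theorem mul_def' (a b : ℍ[ℝ]) : a * b =
    ⟨a.re * b.re + (-1) * a.imI * b.imI + (-1) * a.imJ * b.imJ + 0 * (-1) * a.imJ * b.imK - (-1) * (-1) * a.imK * b.imK,
      a.re * b.imI + a.imI * b.re + 0 * a.imI * b.imI - (-1) * a.imJ * b.imK + (-1) * a.imK * b.imJ,
      a.re * b.imJ + (-1) * a.imI * b.imK + a.imJ * b.re + 0 * a.imJ * b.imI - (-1) * a.imK * b.imI,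
      a.re * b.imK + a.imI * b.imJ + 0 * a.imI * b.imK - a.imJ * b.imI + a.imK * b.re⟩ := rfl

theorem neg_def' (a : ℍ[ℝ]) : -a = ⟨-a.re, -a.imI, -a.imJ, -a.imK⟩ := rfl

theorem one_def' : (1 : ℍ[ℝ]) = ⟨1, 0, 0, 0⟩ := rfl

set_option maxHeartbeats 2000000 in
/-- For a purely imaginary unit quaternion `q = b·i + c·j + d·k` with `b² + c² + d² = 1`,
the ℝ-linear map `x ↦ q⁻¹ · x · j` on ℍ has characteristic polynomial `(X-1)² (X+1)²`,
i.e. eigenvalues `1` and `-1`, each with multiplicity two. -/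
theorem stmt_5 (b c d : ℝ) (h : b ^ 2 + c ^ 2 + d ^ 2 = 1) :
    let q : ℍ[ℝ] := ⟨0, b, c, d⟩
    let j : ℍ[ℝ] := ⟨0, 0, 1, 0⟩
    let M : Matrix (Fin 4) (Fin 4) ℝ :=
      LinearMap.toMatrix (QuaternionAlgebra.basisOneIJK (-1 : ℝ) 0 (-1))
        (QuaternionAlgebra.basisOneIJK (-1 : ℝ) 0 (-1))
        ((LinearMap.mulLeft ℝ q⁻¹).comp (LinearMap.mulRight ℝ j))
    M.charpoly = (X - 1) ^ 2 * (X + 1) ^ 2 := by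
  intro q j M
  have hq : q⁻¹ = -q := by
    refine inv_eq_of_mul_eq_one_right ?_
    rw [mul_def', neg_def', one_def']
    refine QuaternionAlgebra.ext ?_ ?_ ?_ ?_ <;> dsimp only [q] <;> nlinarith [h]
  have key : ∀ x : ℍ[ℝ], ((LinearMap.mulLeft ℝ q⁻¹).comp (LinearMap.mulRight ℝ j)) x
      = q⁻¹ * (x * j) := fun _ => rfl
  have e00 : M 0 0 = c := by
    simp only [M]
    erw [LinearMap.toMatrix_apply]
    erw [key]
    rw [hq]
    erw [mul_def', mul_def', neg_def']
    simp [q, j, QuaternionAlgebra.coe_basisOneIJK_repr,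
      QuaternionAlgebra.basisOneIJK, Module.Basis.coe_ofEquivFun,
      QuaternionAlgebra.coe_linearEquivTuple_symm, QuaternionAlgebra.equivTuple,
      Quaternion.re_mul, Quaternion.imI_mul,
      Quaternion.imJ_mul, Quaternion.imK_mul]
  have e01 : M 0 1 = d := by
    simp only [M]
    erw [LinearMap.toMatrix_apply]
    erw [key]
    rw [hq]
    erw [mul_def', mul_def', neg_def']
    simp [q, j, QuaternionAlgebra.coe_basisOneIJK_repr,
      QuaternionAlgebra.basisOneIJK, Module.Basis.coe_ofEquivFun,
      QuaternionAlgebra.coe_linearEquivTuple_symm, QuaternionAlgebra.equivTuple,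
      Quaternion.re_mul, Quaternion.imI_mul,
      Quaternion.imJ_mul, Quaternion.imK_mul]
  have e02 : M 0 2 = 0 := by
    simp only [M]
    erw [LinearMap.toMatrix_apply]
    erw [key]
    rw [hq]
    erw [mul_def', mul_def', neg_def']
    simp [q, j, QuaternionAlgebra.coe_basisOneIJK_repr,
      QuaternionAlgebra.basisOneIJK, Module.Basis.coe_ofEquivFun,
      QuaternionAlgebra.coe_linearEquivTuple_symm, QuaternionAlgebra.equivTuple,
      Quaternion.re_mul, Quaternion.imI_mul,
      Quaternion.imJ_mul, Quaternion.imK_mul]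
  have e03 : M 0 3 = -b := by
    simp only [M]
    erw [LinearMap.toMatrix_apply]
    erw [key]
    rw [hq]
    erw [mul_def', mul_def', neg_def']
    simp [q, j, QuaternionAlgebra.coe_basisOneIJK_repr,
      QuaternionAlgebra.basisOneIJK, Module.Basis.coe_ofEquivFun,
      QuaternionAlgebra.coe_linearEquivTuple_symm, QuaternionAlgebra.equivTuple,
      Quaternion.re_mul, Quaternion.imI_mul,
      Quaternion.imJ_mul, Quaternion.imK_mul]
  have e10 : M 1 0 = d := by
    simp only [M]
    erw [LinearMap.toMatrix_apply]
    erw [key]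
    rw [hq]
    erw [mul_def', mul_def', neg_def']
    simp [q, j, QuaternionAlgebra.coe_basisOneIJK_repr,
      QuaternionAlgebra.basisOneIJK, Module.Basis.coe_ofEquivFun,
      QuaternionAlgebra.coe_linearEquivTuple_symm, QuaternionAlgebra.equivTuple,
      Quaternion.re_mul, Quaternion.imI_mul,
      Quaternion.imJ_mul, Quaternion.imK_mul]
  have e11 : M 1 1 = -c := by
    simp only [M]
    erw [LinearMap.toMatrix_apply]
    erw [key]
    rw [hq]
    erw [mul_def', mul_def', neg_def']
    simp [q, j, QuaternionAlgebra.coe_basisOneIJK_repr,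
      QuaternionAlgebra.basisOneIJK, Module.Basis.coe_ofEquivFun,
      QuaternionAlgebra.coe_linearEquivTuple_symm, QuaternionAlgebra.equivTuple,
      Quaternion.re_mul, Quaternion.imI_mul,
      Quaternion.imJ_mul, Quaternion.imK_mul]
  have e12 : M 1 2 = b := by
    simp only [M]
    erw [LinearMap.toMatrix_apply]
    erw [key]
    rw [hq]
    erw [mul_def', mul_def', neg_def']
    simp [q, j, QuaternionAlgebra.coe_basisOneIJK_repr,
      QuaternionAlgebra.basisOneIJK, Module.Basis.coe_ofEquivFun,
      QuaternionAlgebra.coe_linearEquivTuple_symm, QuaternionAlgebra.equivTuple,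
      Quaternion.re_mul, Quaternion.imI_mul,
      Quaternion.imJ_mul, Quaternion.imK_mul]
  have e13 : M 1 3 = 0 := by
    simp only [M]
    erw [LinearMap.toMatrix_apply]
    erw [key]
    rw [hq]
    erw [mul_def', mul_def', neg_def']
    simp [q, j, QuaternionAlgebra.coe_basisOneIJK_repr,
      QuaternionAlgebra.basisOneIJK, Module.Basis.coe_ofEquivFun,
      QuaternionAlgebra.coe_linearEquivTuple_symm, QuaternionAlgebra.equivTuple,
      Quaternion.re_mul, Quaternion.imI_mul,
      Quaternion.imJ_mul, Quaternion.imK_mul]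
  have e20 : M 2 0 = 0 := by
    simp only [M]
    erw [LinearMap.toMatrix_apply]
    erw [key]
    rw [hq]
    erw [mul_def', mul_def', neg_def']
    simp [q, j, QuaternionAlgebra.coe_basisOneIJK_repr,
      QuaternionAlgebra.basisOneIJK, Module.Basis.coe_ofEquivFun,
      QuaternionAlgebra.coe_linearEquivTuple_symm, QuaternionAlgebra.equivTuple,
      Quaternion.re_mul, Quaternion.imI_mul,
      Quaternion.imJ_mul, Quaternion.imK_mul]
  have e21 : M 2 1 = b := by
    simp only [M]
    erw [LinearMap.toMatrix_apply]
    erw [key]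
    rw [hq]
    erw [mul_def', mul_def', neg_def']
    simp [q, j, QuaternionAlgebra.coe_basisOneIJK_repr,
      QuaternionAlgebra.basisOneIJK, Module.Basis.coe_ofEquivFun,
      QuaternionAlgebra.coe_linearEquivTuple_symm, QuaternionAlgebra.equivTuple,
      Quaternion.re_mul, Quaternion.imI_mul,
      Quaternion.imJ_mul, Quaternion.imK_mul]
  have e22 : M 2 2 = c := by
    simp only [M]
    erw [LinearMap.toMatrix_apply]
    erw [key]
    rw [hq]
    erw [mul_def', mul_def', neg_def']
    simp [q, j, QuaternionAlgebra.coe_basisOneIJK_repr,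
      QuaternionAlgebra.basisOneIJK, Module.Basis.coe_ofEquivFun,
      QuaternionAlgebra.coe_linearEquivTuple_symm, QuaternionAlgebra.equivTuple,
      Quaternion.re_mul, Quaternion.imI_mul,
      Quaternion.imJ_mul, Quaternion.imK_mul]
  have e23 : M 2 3 = d := by
    simp only [M]
    erw [LinearMap.toMatrix_apply]
    erw [key]
    rw [hq]
    erw [mul_def', mul_def', neg_def']
    simp [q, j, QuaternionAlgebra.coe_basisOneIJK_repr,
      QuaternionAlgebra.basisOneIJK, Module.Basis.coe_ofEquivFun,
      QuaternionAlgebra.coe_linearEquivTuple_symm, QuaternionAlgebra.equivTuple,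
      Quaternion.re_mul, Quaternion.imI_mul,
      Quaternion.imJ_mul, Quaternion.imK_mul]
  have e30 : M 3 0 = -b := by
    simp only [M]
    erw [LinearMap.toMatrix_apply]
    erw [key]
    rw [hq]
    erw [mul_def', mul_def', neg_def']
    simp [q, j, QuaternionAlgebra.coe_basisOneIJK_repr,
      QuaternionAlgebra.basisOneIJK, Module.Basis.coe_ofEquivFun,
      QuaternionAlgebra.coe_linearEquivTuple_symm, QuaternionAlgebra.equivTuple,
      Quaternion.re_mul, Quaternion.imI_mul,
      Quaternion.imJ_mul, Quaternion.imK_mul]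
  have e31 : M 3 1 = 0 := by
    simp only [M]
    erw [LinearMap.toMatrix_apply]
    erw [key]
    rw [hq]
    erw [mul_def', mul_def', neg_def']
    simp [q, j, QuaternionAlgebra.coe_basisOneIJK_repr,
      QuaternionAlgebra.basisOneIJK, Module.Basis.coe_ofEquivFun,
      QuaternionAlgebra.coe_linearEquivTuple_symm, QuaternionAlgebra.equivTuple,
      Quaternion.re_mul, Quaternion.imI_mul,
      Quaternion.imJ_mul, Quaternion.imK_mul]
  have e32 : M 3 2 = d := by
    simp only [M]
    erw [LinearMap.toMatrix_apply]
    erw [key]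
    rw [hq]
    erw [mul_def', mul_def', neg_def']
    simp [q, j, QuaternionAlgebra.coe_basisOneIJK_repr,
      QuaternionAlgebra.basisOneIJK, Module.Basis.coe_ofEquivFun,
      QuaternionAlgebra.coe_linearEquivTuple_symm, QuaternionAlgebra.equivTuple,
      Quaternion.re_mul, Quaternion.imI_mul,
      Quaternion.imJ_mul, Quaternion.imK_mul]
  have e33 : M 3 3 = -c := by
    simp only [M]
    erw [LinearMap.toMatrix_apply]
    erw [key]
    rw [hq]
    erw [mul_def', mul_def', neg_def']
    simp [q, j, QuaternionAlgebra.coe_basisOneIJK_repr,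
      QuaternionAlgebra.basisOneIJK, Module.Basis.coe_ofEquivFun,
      QuaternionAlgebra.coe_linearEquivTuple_symm, QuaternionAlgebra.equivTuple,
      Quaternion.re_mul, Quaternion.imI_mul,
      Quaternion.imJ_mul, Quaternion.imK_mul]
  have hM : M = !![c, d, 0, -b; d, -c, b, 0; 0, b, c, d; -b, 0, d, -c] := by
    ext r s
    fin_cases r <;> fin_cases s
    · exact e00
    · exact e01
    · exact e02
    · exact e03
    · exact e10
    · exact e11
    · exact e12
    · exact e13
    · exact e20
    · exact e21
    · exact e22
    · exact e23
    · exact e30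
    · exact e31
    · exact e32
    · exact e33
  rw [hM]
  exact charpoly_aux b c d h
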